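/- arXiv:1512.01490 — 3 statements merged into one kernel-verified Lean document; each statement's English description precedes it below -/
import Mathlib

section
/- Let X be a random vector with density f, φ measurable, and suppose E[exp(α φ(X))] < ∞ for α ∈ (-a, b). Let c: (-a, b) → ℝ be a twice-differentiable function such that α ↦ exp(-c(α)) E[exp(α φ(X))] is log-concave on (-a, b). Then for all α ∈ (-a, b), E[exp(α(φ(X) - E φ(X)))] ≤ exp(ψ_c(α)), where ψ_c(α) = c(α) - c(0) - c'(0) α. -/
open MeasureTheory ProbabilityTheory Real

lemma concave_tangent {s : Set ℝ} {g : ℝ → ℝ} {g' x y : ℝ} (hg : ConcaveOn ℝ s g)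
    (hx : x ∈ s) (hy : y ∈ s) (hd : HasDerivAt g g' x) : g y ≤ g x + g' * (y - x) := by
  rcases lt_trichotomy y x with h | h | h
  · have := hg.neg.slope_le_of_hasDerivAt hy hx h hd.neg
    rw [slope_def_field] at this
    have hxy : 0 < x - y := by linarith
    simp only [Pi.neg_apply] at this
    rw [div_le_iff₀ hxy] at this
    nlinarith
  · simp [h]
  · have := hg.neg.le_slope_of_hasDerivAt hx hy h hd.neg
    rw [slope_def_field] at this
    have hxy : 0 < y - x := by linarith
    simp only [Pi.neg_apply] at this
    rw [le_div_iff₀ hxy] at this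
    nlinarith


/-- If `c` is twice differentiable on `(-a,b)` and
`α ↦ exp(-c(α)) E[exp(α φ(X))]` is log-concave on `(-a,b)`, then
`E[exp(α (φ(X) - E φ(X)))] ≤ exp(ψ_c(α))` for `α ∈ (-a,b)`, where
`ψ_c(α) = c(α) - c(0) - c'(0) α`. -/
theorem stmt2
    {Ω : Type*} [MeasureSpace Ω] [IsProbabilityMeasure (ℙ : Measure Ω)]
    (n : ℕ) (X : Ω → (Fin n → ℝ)) (hX : Measurable X)
    (f : (Fin n → ℝ) → ℝ) (hf_nonneg : ∀ x, 0 ≤ f x)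
    (hf_density : Measure.map X ℙ = volume.withDensity (fun x => ENNReal.ofReal (f x)))
    (φ : (Fin n → ℝ) → ℝ) (hφ : Measurable φ)
    (a b : ℝ) (ha : 0 < a) (hb : 0 < b)
    (hL : ∀ α ∈ Set.Ioo (-a) b, Integrable (fun ω => Real.exp (α * φ (X ω))) ℙ)
    (c : ℝ → ℝ) (hc : ∀ α ∈ Set.Ioo (-a) b, ContDiffAt ℝ 2 c α)
    (hlc : ConcaveOn ℝ (Set.Ioo (-a) b)
      (fun α => Real.log (Real.exp (-c α) * ∫ ω, Real.exp (α * φ (X ω))))) :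
    ∀ α ∈ Set.Ioo (-a) b,
      (∫ ω, Real.exp (α * (φ (X ω) - ∫ ω', φ (X ω'))))
        ≤ Real.exp (c α - c 0 - deriv c 0 * α) := by
  intro α hα
  set Y : Ω → ℝ := fun ω => φ (X ω) with hYdef
  have hYm : Measurable Y := hφ.comp hX
  have h0 : (0:ℝ) ∈ Set.Ioo (-a) b := ⟨by linarith, hb⟩
  set ε : ℝ := min a b / 4 with hεdef
  have hε0 : 0 < ε := by
    have := lt_min ha hb
    positivity
  have h2ε : 2 * ε ∈ Set.Ioo (-a) b := by
    constructor
    · nlinarith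
    · have := min_le_right a b
      nlinarith
  have hn2ε : -(2 * ε) ∈ Set.Ioo (-a) b := by
    constructor
    · have := min_le_left a b
      nlinarith
    · nlinarith
  set L : ℝ → ℝ := fun β => ∫ ω, Real.exp (β * Y ω) with hLdef
  have hLpos : ∀ β ∈ Set.Ioo (-a) b, 0 < L β := by
    intro β hβ
    have := ProbabilityTheory.mgf_pos (X := Y) (μ := ℙ) (hL β hβ)
    simpa [ProbabilityTheory.mgf, hLdef] using this
  have hL0 : L 0 = 1 := by
    simp [hLdef]
  -- pointwise bound
  have key : ∀ (y x : ℝ), |x| ≤ ε →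
      |y| * Real.exp (x * y) ≤ (1/ε) * (Real.exp (2 * ε * y) + Real.exp (-(2 * ε) * y)) := by
    intro y x hx
    have h1 : x * y ≤ ε * |y| := by
      calc x * y ≤ |x * y| := le_abs_self _
        _ = |x| * |y| := abs_mul x y
        _ ≤ ε * |y| := mul_le_mul_of_nonneg_right hx (abs_nonneg y)
    have h3 : |y| ≤ (1/ε) * Real.exp (ε * |y|) := by
      have h := Real.add_one_le_exp (ε * |y|)
      have h' : ε * |y| ≤ Real.exp (ε * |y|) := by nlinarith [Real.exp_pos (ε * |y|)]
      calc |y| = (1/ε) * (ε * |y|) := by field_simp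
        _ ≤ (1/ε) * Real.exp (ε * |y|) := by
            apply mul_le_mul_of_nonneg_left h' (by positivity)
    have h5 : Real.exp (2 * ε * |y|) ≤ Real.exp (2 * ε * y) + Real.exp (-(2 * ε) * y) := by
      rcases abs_cases y with ⟨h, _⟩ | ⟨h, _⟩
      · rw [h]
        exact le_add_of_nonneg_right (Real.exp_pos _).le
      · rw [h]
        have : 2 * ε * -y = -(2 * ε) * y := by ring
        rw [this]
        exact le_add_of_nonneg_left (Real.exp_pos _).le
    calc |y| * Real.exp (x * y)
        ≤ ((1/ε) * Real.exp (ε * |y|)) * Real.exp (ε * |y|) := by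
          apply mul_le_mul h3 (Real.exp_le_exp.2 h1) (Real.exp_pos _).le (by positivity)
      _ = (1/ε) * Real.exp (2 * ε * |y|) := by
          rw [mul_assoc, ← Real.exp_add]; ring_nf
      _ ≤ (1/ε) * (Real.exp (2 * ε * y) + Real.exp (-(2 * ε) * y)) := by
          apply mul_le_mul_of_nonneg_left h5 (by positivity)
  have hbound_int : Integrable
      (fun ω => (1/ε) * (Real.exp (2 * ε * Y ω) + Real.exp (-(2 * ε) * Y ω))) ℙ :=
    ((hL _ h2ε).add (hL _ hn2ε)).const_mul _
  -- derivative of L at 0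
  have hDL : HasDerivAt L (∫ ω, Y ω * Real.exp ((0:ℝ) * Y ω)) 0 := by
    refine (hasDerivAt_integral_of_dominated_loc_of_deriv_le (μ := ℙ)
      (F := fun x ω => Real.exp (x * Y ω)) (F' := fun x ω => Y ω * Real.exp (x * Y ω))
      (bound := fun ω => (1/ε) * (Real.exp (2 * ε * Y ω) + Real.exp (-(2 * ε) * Y ω)))
      (Metric.ball_mem_nhds _ hε0) ?_ ?_ ?_ ?_ hbound_int ?_).2
    · exact Filter.Eventually.of_forall fun x => ((hYm.const_mul x).exp).aestronglyMeasurable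
    · exact hL 0 h0
    · exact (hYm.mul ((hYm.const_mul 0).exp)).aestronglyMeasurable
    · refine Filter.Eventually.of_forall fun ω => fun x hx => ?_
      rw [Metric.mem_ball, Real.dist_eq, sub_zero] at hx
      rw [Real.norm_eq_abs, abs_mul, Real.abs_exp]
      exact key (Y ω) x hx.le
    · refine Filter.Eventually.of_forall fun ω => fun x _ => ?_
      have := (hasDerivAt_mul_const (Y ω) : HasDerivAt (fun x : ℝ => x * Y ω) (Y ω) x).exp
      simpa [mul_comm] using this
  set m : ℝ := ∫ ω, Y ω with hmdef
  have hDL' : HasDerivAt L m 0 := by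
    convert hDL using 1
    simp [hmdef]
  have hlog : HasDerivAt (fun β => Real.log (L β)) m 0 := by
    have := hDL'.log (by rw [hL0]; norm_num)
    simpa [hL0] using this
  have hcd : HasDerivAt c (deriv c 0) 0 :=
    (((hc 0 h0).differentiableAt (by norm_num)).hasDerivAt)
  have hg : HasDerivAt (fun β => -c β + Real.log (L β)) (-(deriv c 0) + m) 0 := hcd.neg.add hlog
  set F : ℝ → ℝ := fun β => Real.log (Real.exp (-c β) * L β) with hFdef
  have hFg : ∀ β ∈ Set.Ioo (-a) b, F β = -c β + Real.log (L β) := by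
    intro β hβ
    rw [hFdef]
    simp only
    rw [Real.log_mul (Real.exp_ne_zero _) (hLpos β hβ).ne', Real.log_exp]
  have hF0 : HasDerivAt F (-(deriv c 0) + m) 0 := by
    refine hg.congr_of_eventuallyEq ?_
    exact Filter.eventuallyEq_of_mem (isOpen_Ioo.mem_nhds h0) hFg
  have htan : F α ≤ F 0 + (-(deriv c 0) + m) * (α - 0) := concave_tangent hlc h0 hα hF0
  rw [hFg α hα, hFg 0 h0, hL0, Real.log_one] at htan
  -- conclude
  have heq : (fun ω => Real.exp (α * (Y ω - m)))
      = fun ω => Real.exp (α * Y ω) * Real.exp (-(α * m)) := by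
    funext ω
    rw [← Real.exp_add]
    ring_nf
  rw [heq, integral_mul_const]
  have hpos : 0 < L α * Real.exp (-(α * m)) :=
    mul_pos (hLpos α hα) (Real.exp_pos _)
  rw [show (∫ ω, Real.exp (α * Y ω)) = L α from rfl]
  rw [← Real.log_le_iff_le_exp hpos, Real.log_mul (hLpos α hα).ne' (Real.exp_ne_zero _),
    Real.log_exp]
  linarith
end

section
/- Let s > 0 and let φ: [0, ∞) → [0, ∞) be an integrable s-concave function (i.e. φ^s is concave on its support). Then the function p ↦ B(p, 1/s + 1)^{-1} ∫₀^∞ t^{p-1} φ(t) dt is log-concave on (0, ∞), where B denotes the Beta function. -/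
open MeasureTheory Real

/-- The Beta function `B(x,y) = Γ(x)Γ(y)/Γ(x+y) = ∫₀¹ t^{x-1}(1-t)^{y-1} dt`. -/
noncomputable def betaFn (x y : ℝ) : ℝ := Real.Gamma x * Real.Gamma y / Real.Gamma (x + y)

section AuxLemmas
open Set

def SConc (s : ℝ) (φ : ℝ → ℝ) : Prop := ∀ x ∈ Set.Ici (0 : ℝ), ∀ y ∈ Set.Ici (0 : ℝ),
    0 < φ x * φ y → ∀ lam ∈ Set.Icc (0 : ℝ) 1,
      ((1 - lam) * φ x ^ s + lam * φ y ^ s) ^ (1 / s) ≤ φ ((1 - lam) * x + lam * y)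



lemma rpow_s_inv (s x : ℝ) (hs : 0 < s) (hx : 0 ≤ x) : (x ^ s) ^ (1/s) = x := by
  rw [← Real.rpow_mul hx, mul_one_div, div_self (ne_of_gt hs), Real.rpow_one]

lemma rpow_inv_s' (s x : ℝ) (hs : 0 < s) (hx : 0 ≤ x) : (x ^ (1/s)) ^ s = x := by
  rw [← Real.rpow_mul hx, one_div_mul_cancel (ne_of_gt hs), Real.rpow_one]

lemma sconc_pow (s : ℝ) (hs : 0 < s) (φ : ℝ → ℝ) (hφ_nonneg : ∀ t, 0 ≤ φ t)
    (hφ_conc : SConc s φ)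
    (x : ℝ) (hx : 0 ≤ x) (y : ℝ) (hy : 0 ≤ y) (hpos : 0 < φ x * φ y)
    (lam : ℝ) (hlam : lam ∈ Set.Icc (0:ℝ) 1) :
    (1 - lam) * φ x ^ s + lam * φ y ^ s ≤ φ ((1 - lam) * x + lam * y) ^ s := by
  have hX : 0 ≤ (1 - lam) * φ x ^ s + lam * φ y ^ s := by
    have := Real.rpow_nonneg (hφ_nonneg x) s
    have := Real.rpow_nonneg (hφ_nonneg y) s
    have h1 := hlam.1; have h2 := hlam.2
    nlinarith
  have h := hφ_conc x hx y hy hpos lam hlam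
  calc (1 - lam) * φ x ^ s + lam * φ y ^ s
      = (((1 - lam) * φ x ^ s + lam * φ y ^ s) ^ (1/s)) ^ s := (rpow_inv_s' s _ hs hX).symm
    _ ≤ φ ((1 - lam) * x + lam * y) ^ s :=
        Real.rpow_le_rpow (Real.rpow_nonneg hX _) h hs.le

-- upper bound near zero
lemma phi_bound (s : ℝ) (hs : 0 < s) (φ : ℝ → ℝ) (hφ_nonneg : ∀ t, 0 ≤ φ t)
    (hφ_conc : SConc s φ) (u v : ℝ) (hu : 0 < u) (huv : u < v) (hφv : 0 < φ v) :
    ∀ t ∈ Set.Ioc (0:ℝ) u, φ t ≤ φ u * (v/(v-u)) ^ (1/s) := by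
  intro t ht
  have hM1 : (1:ℝ) ≤ (v/(v-u)) ^ (1/s) := by
    have h1 : (1:ℝ) ≤ v/(v-u) := by
      rw [le_div_iff₀ (by linarith)]; linarith
    calc (1:ℝ) = 1 ^ (1/s) := (Real.one_rpow _).symm
      _ ≤ (v/(v-u)) ^ (1/s) := Real.rpow_le_rpow (by norm_num) h1 (by positivity)
  rcases eq_or_lt_of_le ht.2 with heq | htu
  · rw [heq]
    nlinarith [hφ_nonneg u]
  rcases (lt_or_ge 0 (φ t)) with hφt | hφt
  swap
  · have : φ t = 0 := le_antisymm hφt (hφ_nonneg t)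
    rw [this]; exact mul_nonneg (hφ_nonneg u) (le_trans zero_le_one hM1)
  -- main case 0 < t < u, φ t > 0
  set lam : ℝ := (u - t) / (v - t) with hlamdef
  have htv : t < v := lt_trans htu huv
  have hlam0 : 0 ≤ lam := div_nonneg (by linarith) (by linarith)
  have hlam1 : lam ≤ 1 := (div_le_one (by linarith)).2 (by linarith)
  have hlam' : lam * (v - t) = u - t := div_mul_cancel₀ _ (sub_ne_zero.mpr ((ne_of_gt htv)))
  have hueq : (1 - lam) * t + lam * v = u := by linear_combination hlam'
  have h := sconc_pow s hs φ hφ_nonneg hφ_conc t ht.1.le v (by linarith)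
    (mul_pos hφt hφv) lam ⟨hlam0, hlam1⟩
  rw [hueq] at h
  -- (1-lam) ≥ (v-u)/v
  have h1lam : (v - u)/(v - t) = 1 - lam := by
    rw [eq_sub_iff_add_eq, ← add_div, show v - u + (u - t) = v - t from by ring]
    exact div_self (sub_ne_zero.mpr ((ne_of_gt htv)))
  have hfrac : (v - u)/v ≤ 1 - lam := by
    rw [← h1lam]
    exact div_le_div_of_nonneg_left (by linarith) (by linarith : (0:ℝ) < v - t) (by linarith [ht.1] : v - t ≤ v)
  -- so φ t ^ s ≤ φ u ^ s * (v/(v-u))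
  have hkey : φ t ^ s ≤ φ u ^ s * (v/(v-u)) := by
    have h2 : ((v-u)/v) * φ t ^ s ≤ φ u ^ s := by
      have h3 : (1 - lam) * φ t ^ s ≤ φ u ^ s := by
        nlinarith [Real.rpow_nonneg (hφ_nonneg v) s, Real.rpow_nonneg (hφ_nonneg t) s]
      nlinarith [Real.rpow_nonneg (hφ_nonneg t) s]
    rw [div_mul_eq_mul_div, div_le_iff₀ (by linarith)] at h2
    rw [← mul_div_assoc, le_div_iff₀ (by linarith : (0:ℝ) < v - u)]
    nlinarith [h2]
  calc φ t = (φ t ^ s) ^ (1/s) := (rpow_s_inv s _ hs (hφ_nonneg t)).symm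
    _ ≤ (φ u ^ s * (v/(v-u))) ^ (1/s) :=
        Real.rpow_le_rpow (Real.rpow_nonneg (hφ_nonneg t) s) hkey (by positivity)
    _ = φ u * (v/(v-u)) ^ (1/s) := by
        rw [Real.mul_rpow (Real.rpow_nonneg (hφ_nonneg u) s) (le_of_lt (div_pos (by linarith) (by linarith))),
          rpow_s_inv s _ hs (hφ_nonneg u)]

-- support is bounded
lemma support_bdd (s : ℝ) (hs : 0 < s) (φ : ℝ → ℝ) (hφ_nonneg : ∀ t, 0 ≤ φ t)
    (hφ_int : IntegrableOn φ (Set.Ioi (0 : ℝ)))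
    (hφ_conc : SConc s φ)
    (u : ℝ) (hu : 0 < u) (hφu : 0 < φ u) :
    ∃ T, 0 < T ∧ ∀ t, T < t → φ t = 0 := by
  by_contra hcon
  push_neg at hcon
  set c₀ : ℝ := (φ u ^ s / 2) ^ (1/s) with hc₀
  have hc₀pos : 0 < c₀ := Real.rpow_pos_of_pos (by positivity) _
  have claim : ∀ w, u ≤ w → c₀ ≤ φ w := by
    intro w hw
    rcases eq_or_lt_of_le hw with heq | hw'
    · rw [← heq]
      calc c₀ ≤ (φ u ^ s) ^ (1/s) :=
          Real.rpow_le_rpow (by positivity) (by nlinarith [Real.rpow_pos_of_pos hφu s]) (by positivity)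
        _ = φ u := rpow_s_inv s _ hs (hφ_nonneg u)
    · obtain ⟨t, ht1, ht2⟩ := hcon (max (2*w - u) w) (lt_of_lt_of_le hu (le_trans hw (le_max_right _ _)))
      have hφt : 0 < φ t := lt_of_le_of_ne (hφ_nonneg t) (Ne.symm ht2)
      have htw : w < t := lt_of_le_of_lt (le_max_right _ _) ht1
      have ht2w : 2*w - u < t := lt_of_le_of_lt (le_max_left _ _) ht1
      set lam : ℝ := (w - u) / (t - u) with hlam
      have htu : u < t := lt_trans hw' htw
      have hlam0 : 0 ≤ lam := div_nonneg (by linarith) (by linarith)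
      have hlam1 : lam ≤ 1 := (div_le_one (by linarith)).2 (by linarith)
      have hlamhalf : lam ≤ 1/2 := by
        rw [hlam, div_le_div_iff₀ (by linarith) (by norm_num)]
        linarith
      have hlam' : lam * (t - u) = w - u := div_mul_cancel₀ _ (by intro h; rw [sub_eq_zero] at h; exact absurd h (ne_of_gt htu))
      have hweq : (1 - lam) * u + lam * t = w := by linear_combination hlam'
      have h := sconc_pow s hs φ hφ_nonneg hφ_conc u hu.le t (by linarith) (mul_pos hφu hφt)
        lam ⟨hlam0, hlam1⟩
      rw [hweq] at h
      have hkey : c₀ ^ s ≤ φ w ^ s := by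
        rw [hc₀, rpow_inv_s' s _ hs (by positivity)]
        nlinarith [Real.rpow_pos_of_pos hφu s, Real.rpow_nonneg (hφ_nonneg t) s]
      calc c₀ = (c₀ ^ s) ^ (1/s) := (rpow_s_inv s _ hs hc₀pos.le).symm
        _ ≤ (φ w ^ s) ^ (1/s) := Real.rpow_le_rpow (by positivity) hkey (by positivity)
        _ = φ w := rpow_s_inv s _ hs (hφ_nonneg w)
  -- contradiction with integrability
  have hsub : Set.Ici u ⊆ Set.Ioi (0:ℝ) := fun x hx => lt_of_lt_of_le hu hx
  have hfin := (hφ_int.mono_set hsub).hasFiniteIntegral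
  rw [HasFiniteIntegral] at hfin
  have hlow : (ENNReal.ofReal c₀) * volume (Set.Ici u) ≤ ∫⁻ x in Set.Ici u, ‖φ x‖₊ := by
    rw [← setLIntegral_const]
    refine lintegral_mono_ae (ae_restrict_of_forall_mem measurableSet_Ici fun x hx => ?_)
    have h1 : c₀ ≤ φ x := claim x hx
    calc ENNReal.ofReal c₀ ≤ ENNReal.ofReal (φ x) := ENNReal.ofReal_le_ofReal h1
      _ = ↑‖φ x‖₊ := (Real.enorm_eq_ofReal (hφ_nonneg x)).symm
  rw [Real.volume_Ici, ENNReal.mul_top (by simp [ENNReal.ofReal_eq_zero, not_le, hc₀pos])] at hlow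
  exact absurd (lt_of_le_of_lt hlow hfin) (by simp)


lemma rpow_integrableOn (p a : ℝ) (hp : 0 < p) (ha : 0 < a) :
    IntegrableOn (fun t : ℝ => t ^ (p-1)) (Set.Ioc 0 a) := by
  have h := intervalIntegral.intervalIntegrable_rpow' (a := 0) (b := a) (by linarith : (-1:ℝ) < p - 1)
  rw [intervalIntegrable_iff] at h
  rwa [Set.uIoc_of_le ha.le] at h

lemma xi_meas (s a : ℝ) (hs : 0 < s) : Continuous (fun t : ℝ => (max (1 - t/a) 0) ^ (1/s)) := by
  refine Continuous.rpow_const ?_ (fun x => Or.inr (by positivity))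
  exact (continuous_const.sub (continuous_id.div_const a)).max continuous_const

lemma integrand_aesm (p : ℝ) {g : ℝ → ℝ} (hg : AEStronglyMeasurable g (volume.restrict (Set.Ioi 0))) :
    AEStronglyMeasurable (fun t => t ^ (p-1) * g t) (volume.restrict (Set.Ioi 0)) := by
  refine AEStronglyMeasurable.mul ?_ hg
  refine (ContinuousOn.aestronglyMeasurable ?_ measurableSet_Ioi)
  intro x hx
  exact (Real.continuousAt_rpow_const x (p-1) (Or.inl (ne_of_gt hx))).continuousWithinAt

lemma xi_zero_of_ge (s a t : ℝ) (hs : 0 < s) (ha : 0 < a) (hta : a ≤ t) :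
    (max (1 - t/a) 0) ^ (1/s) = 0 := by
  have : max (1 - t/a) 0 = 0 := max_eq_right (by
    have : 1 ≤ t / a := (one_le_div ha).2 hta
    linarith)
  rw [this, Real.zero_rpow (by positivity)]

lemma xi_integrableOn (s a p : ℝ) (hs : 0 < s) (ha : 0 < a) (hp : 0 < p) :
    IntegrableOn (fun t : ℝ => t ^ (p-1) * (max (1 - t/a) 0) ^ (1/s)) (Set.Ioi 0) := by
  rw [← Set.Ioc_union_Ioi_eq_Ioi ha.le]
  refine IntegrableOn.union ?_ ?_
  · refine Integrable.mono' (rpow_integrableOn p a hp ha) ?_ ?_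
    · exact (integrand_aesm p (xi_meas s a hs).aestronglyMeasurable.restrict).mono_set
        Set.Ioc_subset_Ioi_self
    · refine (ae_restrict_iff' measurableSet_Ioc).2 (Filter.Eventually.of_forall fun t ht => ?_)
      have h1 : (max (1 - t/a) 0) ^ (1/s) ≤ 1 := by
        apply Real.rpow_le_one (le_max_right _ _) _ (by positivity)
        have : 0 < t / a := div_pos ht.1 ha
        simp only [max_le_iff]
        constructor <;> [linarith; norm_num]
      have h2 : (0:ℝ) < t ^ (p-1) := Real.rpow_pos_of_pos ht.1 _
      rw [Real.norm_eq_abs, abs_mul, abs_of_pos h2, abs_of_nonneg (by positivity)]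
      nlinarith
  · rw [IntegrableOn,
      integrable_congr ((ae_restrict_iff' measurableSet_Ioi).2 (Filter.Eventually.of_forall
        (fun t (ht : t ∈ Set.Ioi a) => ?_)))]
    · exact integrable_zero _ _ _
    · show t ^ (p-1) * (max (1 - t/a) 0) ^ (1/s) = (0:ℝ)
      have : max (1 - t/a) 0 = 0 := max_eq_right (by
        have : 1 ≤ t / a := (one_le_div ha).2 (le_of_lt ht)
        linarith)
      rw [this, Real.zero_rpow (by positivity), mul_zero]

theorem real_beta_integral (x y : ℝ) (hx : 0 < x) (hy : 0 < y) :
    ∫ u in (0:ℝ)..1, u^(x-1)*(1-u)^(y-1) = Real.Gamma x * Real.Gamma y / Real.Gamma (x+y) := by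
  have h := Complex.Gamma_mul_Gamma_eq_betaIntegral (s := x) (t := y) (by simpa using hx) (by simpa using hy)
  have hbeta : Complex.betaIntegral x y = ((∫ u in (0:ℝ)..1, u^(x-1)*(1-u)^(y-1) : ℝ) : ℂ) := by
    rw [Complex.betaIntegral]
    rw [← intervalIntegral.integral_ofReal]
    refine intervalIntegral.integral_congr fun u hu => ?_
    rw [Set.uIcc_of_le (by norm_num : (0:ℝ) ≤ 1)] at hu
    rw [Complex.ofReal_mul, Complex.ofReal_cpow hu.1, Complex.ofReal_cpow (by linarith [hu.2] : (0:ℝ) ≤ 1 - u)]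
    push_cast
    ring
  rw [hbeta] at h
  rw [show ((x:ℂ)+y) = ((x+y :ℝ):ℂ) by push_cast; ring] at h
  rw [Complex.Gamma_ofReal, Complex.Gamma_ofReal, Complex.Gamma_ofReal] at h
  have h' : Real.Gamma x * Real.Gamma y
      = Real.Gamma (x+y) * ∫ u in (0:ℝ)..1, u^(x-1)*(1-u)^(y-1) := by exact_mod_cast h
  have h2 : Real.Gamma (x+y) ≠ 0 := (Real.Gamma_pos_of_pos (by linarith)).ne'
  field_simp [h']
  rw [h']; ring

theorem xi_moment (s a p : ℝ) (hs : 0 < s) (ha : 0 < a) (hp : 0 < p) :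
    ∫ t in Set.Ioi (0:ℝ), t^(p-1) * (max (1-t/a) 0)^(1/s) = a^p * betaFn p (1/s+1) := by
  have hint := xi_integrableOn s a p hs ha hp
  have hsplit : ∫ t in Set.Ioi (0:ℝ), t^(p-1) * (max (1-t/a) 0)^(1/s)
      = ∫ t in Set.Ioc (0:ℝ) a, t^(p-1) * (max (1-t/a) 0)^(1/s) := by
    rw [← Set.Ioc_union_Ioi_eq_Ioi ha.le,
      setIntegral_union (Set.Ioc_disjoint_Ioi le_rfl) measurableSet_Ioi
        (hint.mono_set (by rw [← Set.Ioc_union_Ioi_eq_Ioi ha.le]; exact Set.subset_union_left))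
        (hint.mono_set (by rw [← Set.Ioc_union_Ioi_eq_Ioi ha.le]; exact Set.subset_union_right))]
    have h0 : ∫ t in Set.Ioi a, t^(p-1) * (max (1-t/a) 0)^(1/s) = 0 :=
      setIntegral_eq_zero_of_forall_eq_zero fun t ht => by
        rw [xi_zero_of_ge s a t hs ha (le_of_lt ht), mul_zero]
    rw [h0, add_zero]
  rw [hsplit, ← intervalIntegral.integral_of_le ha.le]
  have hsub := intervalIntegral.smul_integral_comp_mul_left
    (f := fun t => t^(p-1) * (max (1-t/a) 0)^(1/s)) (a := 0) (b := 1) a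
  rw [mul_zero, mul_one] at hsub
  rw [← hsub]
  have hcongr : ∫ u in (0:ℝ)..1, (a*u)^(p-1) * (max (1-(a*u)/a) 0)^(1/s)
      = ∫ u in (0:ℝ)..1, a^(p-1) * (u^(p-1) * (1-u)^((1/s+1)-1)) := by
    refine intervalIntegral.integral_congr fun u hu => ?_
    rw [Set.uIcc_of_le (by norm_num : (0:ℝ) ≤ 1)] at hu
    rw [Real.mul_rpow ha.le hu.1, mul_div_cancel_left₀ _ (ne_of_gt ha),
      max_eq_left (by linarith [hu.2]), show (1/s+1)-1 = 1/s by ring]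
    ring
  rw [hcongr, intervalIntegral.integral_const_mul, real_beta_integral p (1/s+1) hp (by positivity)]
  rw [smul_eq_mul, betaFn, ← mul_assoc]
  congr 1
  rw [show p = 1 + (p-1) by ring, Real.rpow_add ha, Real.rpow_one]
  ring_nf
section
open MeasureTheory Real Set

lemma phi_moment_integrable (s : ℝ) (hs : 0 < s) (φ : ℝ → ℝ) (hφ_nonneg : ∀ t, 0 ≤ φ t)
    (hφ_int : IntegrableOn φ (Set.Ioi (0 : ℝ))) (hφ_conc : SConc s φ)
    (u v T : ℝ) (hu : 0 < u) (huv : u < v) (hφv : 0 < φ v)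
    (hT : ∀ t, T < t → φ t = 0) (p : ℝ) (hp : 0 < p) :
    IntegrableOn (fun t => t ^ (p-1) * φ t) (Set.Ioi (0:ℝ)) := by
  set M : ℝ := φ u * (v/(v-u)) ^ (1/s) with hM
  have hbd := phi_bound s hs φ hφ_nonneg hφ_conc u v hu huv hφv
  set T' : ℝ := max T u with hT'
  set K : ℝ := max (u ^ (p-1)) (T' ^ (p-1)) with hK
  have hK0 : 0 ≤ K := le_trans (Real.rpow_nonneg hu.le _) (le_max_left _ _)
  rw [← Set.Ioc_union_Ioi_eq_Ioi hu.le]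
  refine IntegrableOn.union ?_ ?_
  · refine Integrable.mono' ((rpow_integrableOn p u hp hu).const_mul M) ?_ ?_
    · exact (integrand_aesm p hφ_int.1).mono_set Set.Ioc_subset_Ioi_self
    · refine (ae_restrict_iff' measurableSet_Ioc).2 (Filter.Eventually.of_forall fun t ht => ?_)
      have h2 : (0:ℝ) ≤ t ^ (p-1) := Real.rpow_nonneg ht.1.le _
      rw [Real.norm_eq_abs, abs_mul, abs_of_nonneg h2, abs_of_nonneg (hφ_nonneg t)]
      calc t ^ (p-1) * φ t ≤ t ^ (p-1) * M := by nlinarith [hbd t ht]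
        _ = M * t ^ (p-1) := mul_comm _ _
  · refine Integrable.mono' (((hφ_int.mono_set (fun x (hx : x ∈ Set.Ioi u) =>
        lt_trans hu hx)).const_mul K)) ?_ ?_
    · exact (integrand_aesm p hφ_int.1).mono_set (fun x (hx : x ∈ Set.Ioi u) => lt_trans hu hx)
    · refine (ae_restrict_iff' measurableSet_Ioi).2 (Filter.Eventually.of_forall fun t ht => ?_)
      have ht0 : (0:ℝ) < t := lt_trans hu ht
      have h2 : (0:ℝ) ≤ t ^ (p-1) := Real.rpow_nonneg ht0.le _
      rw [Real.norm_eq_abs, abs_mul, abs_of_nonneg h2, abs_of_nonneg (hφ_nonneg t)]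
      rcases le_or_gt t T' with htT | htT
      · have hKt : t ^ (p-1) ≤ K := by
          rcases le_or_gt 1 p with h1p | h1p
          · exact le_trans (Real.rpow_le_rpow ht0.le htT (by linarith)) (le_max_right _ _)
          · exact le_trans (Real.rpow_le_rpow_of_nonpos hu (le_of_lt ht) (by linarith))
              (le_max_left _ _)
        nlinarith [hφ_nonneg t]
      · have : φ t = 0 := hT t (lt_of_le_of_lt (le_max_left T u) htT)
        rw [this]
        simp [hK0]

lemma phi_moment_pos (s : ℝ) (hs : 0 < s) (φ : ℝ → ℝ) (hφ_nonneg : ∀ t, 0 ≤ φ t)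
    (hφ_conc : SConc s φ)
    (u v : ℝ) (hu : 0 < u) (huv : u < v) (hφu : 0 < φ u) (hφv : 0 < φ v)
    (p : ℝ) (hp : 0 < p)
    (hint : IntegrableOn (fun t => t ^ (p-1) * φ t) (Set.Ioi (0:ℝ))) :
    0 < ∫ t in Set.Ioi (0:ℝ), t ^ (p-1) * φ t := by
  set m : ℝ := min (φ u) (φ v) with hm
  have hm0 : 0 < m := lt_min hφu hφv
  set κ : ℝ := m * min (u ^ (p-1)) (v ^ (p-1)) with hκ
  have hκ0 : 0 < κ := mul_pos hm0 (lt_min (Real.rpow_pos_of_pos hu _) (Real.rpow_pos_of_pos (by linarith) _))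
  have hptwise : ∀ t ∈ Set.Ioc u v, κ ≤ t ^ (p-1) * φ t := by
    intro t ht
    have ht0 : 0 < t := lt_trans hu ht.1
    have h1 : min (u ^ (p-1)) (v ^ (p-1)) ≤ t ^ (p-1) := by
      rcases le_or_gt 1 p with h1p | h1p
      · exact le_trans (min_le_left _ _) (Real.rpow_le_rpow hu.le ht.1.le (by linarith))
      · exact le_trans (min_le_right _ _) (Real.rpow_le_rpow_of_nonpos ht0 ht.2 (by linarith))
    have h2 : m ≤ φ t := by
      set lam : ℝ := (t - u) / (v - u) with hlamdef
      have hlam0 : 0 ≤ lam := div_nonneg (by linarith [ht.1]) (by linarith)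
      have hlam1 : lam ≤ 1 := (div_le_one (by linarith)).2 (by linarith [ht.2])
      have hlam' : lam * (v - u) = t - u := div_mul_cancel₀ _ (by
        intro h; rw [sub_eq_zero] at h; exact absurd h (ne_of_gt huv))
      have hteq : (1 - lam) * u + lam * v = t := by linear_combination hlam'
      have h := sconc_pow s hs φ hφ_nonneg hφ_conc u hu.le v (by linarith)
        (mul_pos hφu hφv) lam ⟨hlam0, hlam1⟩
      rw [hteq] at h
      have hms : m ^ s ≤ φ t ^ s := by
        have h3 : m ^ s ≤ φ u ^ s := Real.rpow_le_rpow hm0.le (min_le_left _ _) hs.le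
        have h4 : m ^ s ≤ φ v ^ s := Real.rpow_le_rpow hm0.le (min_le_right _ _) hs.le
        nlinarith
      calc m = (m ^ s) ^ (1/s) := (rpow_s_inv s _ hs hm0.le).symm
        _ ≤ (φ t ^ s) ^ (1/s) := Real.rpow_le_rpow (Real.rpow_nonneg hm0.le _) hms (by positivity)
        _ = φ t := rpow_s_inv s _ hs (hφ_nonneg t)
    calc κ = m * min (u ^ (p-1)) (v ^ (p-1)) := hκ
      _ ≤ t ^ (p-1) * φ t := by nlinarith [Real.rpow_nonneg ht0.le (p-1), hφ_nonneg t]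
  have hsub : Set.Ioc u v ⊆ Set.Ioi (0:ℝ) := fun x hx => lt_trans hu hx.1
  have step1 : κ * (v - u) ≤ ∫ t in Set.Ioc u v, t ^ (p-1) * φ t := by
    have hconst : ∫ _t in Set.Ioc u v, κ = κ * (v - u) := by
      rw [setIntegral_const, Real.volume_real_Ioc_of_le (by linarith)]
      rw [smul_eq_mul, mul_comm]
    rw [← hconst]
    exact setIntegral_mono_on (integrableOn_const (by
      rw [Real.volume_Ioc]; exact ENNReal.ofReal_ne_top))
      (hint.mono_set hsub) measurableSet_Ioc hptwise
  have step2 : ∫ t in Set.Ioc u v, t ^ (p-1) * φ t ≤ ∫ t in Set.Ioi (0:ℝ), t ^ (p-1) * φ t := by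
    refine setIntegral_mono_set hint ?_ (HasSubset.Subset.eventuallyLE hsub)
    exact (ae_restrict_iff' measurableSet_Ioi).2 (Filter.Eventually.of_forall fun t ht =>
      mul_nonneg (Real.rpow_nonneg (le_of_lt ht) _) (hφ_nonneg t))
  nlinarith [step1, step2]
end
section
open MeasureTheory Real Set

lemma concave_nonneg_between {h : ℝ → ℝ} (hc : ConcaveOn ℝ (Set.Ici 0) h) {α β : ℝ}
    (hα : 0 ≤ α) (hαβ : α < β) (h1 : h α = 0) (h2 : h β = 0) :
    ∀ u ∈ Set.Icc α β, 0 ≤ h u := by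
  intro u hu
  set lam : ℝ := (u - α) / (β - α) with hlamdef
  have hlam0 : 0 ≤ lam := div_nonneg (by linarith [hu.1]) (by linarith)
  have hlam1 : lam ≤ 1 := (div_le_one (by linarith)).2 (by linarith [hu.2])
  have hlam' : lam * (β - α) = u - α := div_mul_cancel₀ _ (by
    intro hh; rw [sub_eq_zero] at hh; exact absurd hh (ne_of_gt hαβ))
  have hueq : (1 - lam) * α + lam * β = u := by linear_combination hlam'
  have := hc.2 (hα : α ∈ Set.Ici (0:ℝ)) (Set.mem_Ici.mpr (by linarith) : β ∈ Set.Ici (0:ℝ))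
    (by linarith : (0:ℝ) ≤ 1 - lam) hlam0 (by ring)
  rw [smul_eq_mul, smul_eq_mul, smul_eq_mul, smul_eq_mul, hueq, h1, h2] at this
  calc (0:ℝ) = (1-lam) * 0 + lam * 0 := by ring
    _ ≤ h u := this

lemma concave_nonpos_right {h : ℝ → ℝ} (hc : ConcaveOn ℝ (Set.Ici 0) h) {α β : ℝ}
    (hα : 0 ≤ α) (hαβ : α < β) (h1 : h α = 0) (h2 : h β = 0) :
    ∀ u, β ≤ u → h u ≤ 0 := by
  intro u hu
  rcases eq_or_lt_of_le hu with heq | hu'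
  · rw [← heq, h2]
  set lam : ℝ := (β - α) / (u - α) with hlamdef
  have hlam0 : 0 < lam := div_pos (by linarith) (by linarith)
  have hlam1 : lam ≤ 1 := (div_le_one (by linarith)).2 (by linarith)
  have hlam' : lam * (u - α) = β - α := div_mul_cancel₀ _ (by
    intro hh; rw [sub_eq_zero] at hh; exact absurd hh (by intro hh2; linarith [hh2 ▸ hαβ]))
  have hueq : (1 - lam) * α + lam * u = β := by linear_combination hlam'
  have := hc.2 (hα : α ∈ Set.Ici (0:ℝ)) (Set.mem_Ici.mpr (by linarith) : u ∈ Set.Ici (0:ℝ))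
    (by linarith : (0:ℝ) ≤ 1 - lam) hlam0.le (by ring)
  rw [smul_eq_mul, smul_eq_mul, smul_eq_mul, smul_eq_mul, hueq, h1, h2] at this
  nlinarith [this]

lemma concave_nonpos_left {h : ℝ → ℝ} (hc : ConcaveOn ℝ (Set.Ici 0) h) {α β : ℝ}
    (hα : 0 ≤ α) (hαβ : α < β) (h1 : h α = 0) (h2 : h β = 0) :
    ∀ u, 0 ≤ u → u ≤ α → h u ≤ 0 := by
  intro u hu0 hu
  rcases eq_or_lt_of_le hu with heq | hu'
  · rw [heq, h1]
  set lam : ℝ := (α - u) / (β - u) with hlamdef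
  have hlam0 : 0 < lam := div_pos (by linarith) (by linarith)
  have hlam1 : lam < 1 := (div_lt_one (by linarith)).2 (by linarith)
  have hlam' : lam * (β - u) = α - u := div_mul_cancel₀ _ (by
    intro hh; rw [sub_eq_zero] at hh; exact absurd hh (by intro hh2; linarith [hh2 ▸ hαβ]))
  have hueq : (1 - lam) * u + lam * β = α := by linear_combination hlam'
  have := hc.2 (hu0 : u ∈ Set.Ici (0:ℝ)) (Set.mem_Ici.mpr (by linarith) : β ∈ Set.Ici (0:ℝ))
    (by linarith : (0:ℝ) ≤ 1 - lam) hlam0.le (by ring)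
  rw [smul_eq_mul, smul_eq_mul, smul_eq_mul, smul_eq_mul, hueq, h1, h2] at this
  nlinarith [this]

lemma concave_theta_affine (θ A B : ℝ) (hθ0 : 0 < θ) (hθ1 : θ < 1) :
    ConcaveOn ℝ (Set.Ici 0) (fun u : ℝ => u ^ θ + (-A - B * u)) := by
  refine ConcaveOn.add ((Real.strictConcaveOn_rpow hθ0 hθ1).concaveOn) ?_
  refine ⟨convex_Ici 0, fun x _ y _ a b ha hb hab => ?_⟩
  rw [smul_eq_mul, smul_eq_mul, smul_eq_mul, smul_eq_mul]
  apply le_of_eq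
  linear_combination (-A) * hab
end
section
open MeasureTheory Real Set

lemma delta_middle (s : ℝ) (hs : 0 < s) (φ : ℝ → ℝ) (hφ_nonneg : ∀ t, 0 ≤ φ t)
    (hφ_conc : SConc s φ) (a c : ℝ) (ha : 0 < a) (hc : 0 ≤ c)
    (x w y : ℝ) (hx : 0 < x) (hxw : x < w) (hwy : w < y)
    (hdx : 0 < φ x - c * (max (1 - x/a) 0) ^ (1/s))
    (hdy : 0 < φ y - c * (max (1 - y/a) 0) ^ (1/s)) :
    0 ≤ φ w - c * (max (1 - w/a) 0) ^ (1/s) := by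
  have hξ : ∀ z : ℝ, 0 ≤ c * (max (1 - z/a) 0) ^ (1/s) := fun z =>
    mul_nonneg hc (Real.rpow_nonneg (le_max_right _ _) _)
  have hφx : 0 < φ x := lt_of_le_of_lt (hξ x) (by linarith)
  have hφy : 0 < φ y := lt_of_le_of_lt (hξ y) (by linarith)
  set lam : ℝ := (w - x) / (y - x) with hlamdef
  have hlam0 : 0 ≤ lam := div_nonneg (by linarith) (by linarith)
  have hlam1 : lam ≤ 1 := (div_le_one (by linarith)).2 (by linarith)
  have hlam' : lam * (y - x) = w - x := div_mul_cancel₀ _ (by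
    intro hh; rw [sub_eq_zero] at hh; exact absurd hh (by intro h2; linarith [h2 ▸ hxw]))
  have hweq : (1 - lam) * x + lam * y = w := by linear_combination hlam'
  have hpow := sconc_pow s hs φ hφ_nonneg hφ_conc x hx.le y (by linarith)
    (mul_pos hφx hφy) lam ⟨hlam0, hlam1⟩
  rw [hweq] at hpow
  have hL : ∀ z : ℝ, 0 < φ z - c * (max (1 - z/a) 0) ^ (1/s) →
      c ^ s * (1 - z/a) ≤ φ z ^ s := by
    intro z hdz
    rcases le_or_gt (1 - z/a) 0 with hza | hza
    · have h1 : (0:ℝ) ≤ c ^ s := Real.rpow_nonneg hc s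
      nlinarith [Real.rpow_nonneg (hφ_nonneg z) s]
    · have hmax : max (1 - z/a) 0 = 1 - z/a := max_eq_left hza.le
      rw [hmax] at hdz
      have h2 : c * (1 - z/a) ^ (1/s) ≤ φ z := by linarith
      calc c ^ s * (1 - z/a) = (c * (1 - z/a) ^ (1/s)) ^ s := by
            rw [Real.mul_rpow hc (Real.rpow_nonneg hza.le _), rpow_inv_s' s _ hs hza.le]
        _ ≤ φ z ^ s := Real.rpow_le_rpow
            (mul_nonneg hc (Real.rpow_nonneg hza.le _)) h2 hs.le
  have hLx := hL x hdx
  have hLy := hL y hdy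
  have hcomb : c ^ s * (1 - w/a) ≤ φ w ^ s := by
    have heq : c ^ s * (1 - w/a)
        = (1 - lam) * (c ^ s * (1 - x/a)) + lam * (c ^ s * (1 - y/a)) := by
      have hww : w = (1 - lam) * x + lam * y := hweq.symm
      rw [hww]; field_simp; ring
    rw [heq]
    nlinarith [hLx, hLy]
  rcases le_or_gt (1 - w/a) 0 with hwa | hwa
  · rw [max_eq_right hwa, Real.zero_rpow (by positivity), mul_zero, sub_zero]
    exact hφ_nonneg w
  · rw [max_eq_left hwa.le]
    have h1 : c * (1 - w/a) ^ (1/s) ≤ φ w := by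
      calc c * (1 - w/a) ^ (1/s) = (c ^ s * (1 - w/a)) ^ (1/s) := by
            rw [Real.mul_rpow (Real.rpow_nonneg hc s) hwa.le, rpow_s_inv s c hs hc]
        _ ≤ (φ w ^ s) ^ (1/s) := Real.rpow_le_rpow
            (mul_nonneg (Real.rpow_nonneg hc s) hwa.le) hcomb (by positivity)
        _ = φ w := rpow_s_inv s _ hs (hφ_nonneg w)
    linarith
end
set_option maxHeartbeats 1000000
section
open MeasureTheory Real Set

lemma key_ineq (s : ℝ) (hs : 0 < s) (φ : ℝ → ℝ) (hφ_nonneg : ∀ t, 0 ≤ φ t)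
    (hφ_int : IntegrableOn φ (Set.Ioi (0:ℝ))) (hφ_conc : SConc s φ)
    (u v T : ℝ) (hu : 0 < u) (huv : u < v) (hφu : 0 < φ u) (hφv : 0 < φ v)
    (hT : ∀ t, T < t → φ t = 0)
    (p q r : ℝ) (hp : 0 < p) (hpr : p < r) (hrq : r < q)
    (a c : ℝ) (ha : 0 < a) (hc : 0 ≤ c)
    (hP : ∫ t in Set.Ioi (0:ℝ), t^(p-1)*φ t = c * (a^p * betaFn p (1/s+1)))
    (hQ : ∫ t in Set.Ioi (0:ℝ), t^(q-1)*φ t = c * (a^q * betaFn q (1/s+1))) :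
    c * (a^r * betaFn r (1/s+1)) ≤ ∫ t in Set.Ioi (0:ℝ), t^(r-1)*φ t := by
  have hq0 : 0 < q := by linarith
  have hr0 : 0 < r := by linarith
  set δ : ℝ → ℝ := fun t => φ t - c * (max (1 - t/a) 0) ^ (1/s) with hδ
  have hIφ : ∀ e : ℝ, 0 < e → IntegrableOn (fun t => t^(e-1)*φ t) (Set.Ioi (0:ℝ)) :=
    fun e he => phi_moment_integrable s hs φ hφ_nonneg hφ_int hφ_conc u v T hu huv hφv hT e he
  have hIδ : ∀ e : ℝ, 0 < e → IntegrableOn (fun t => t^(e-1) * δ t) (Set.Ioi (0:ℝ)) := by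
    intro e he
    have h2 := (xi_integrableOn s a e hs ha he).const_mul c
    refine ((hIφ e he).sub h2).congr (Filter.Eventually.of_forall fun t => ?_)
    simp only [Pi.sub_apply, hδ]; ring
  have hδmom : ∀ e : ℝ, 0 < e → ∫ t in Set.Ioi (0:ℝ), t^(e-1) * δ t
      = (∫ t in Set.Ioi (0:ℝ), t^(e-1)*φ t) - c * (a^e * betaFn e (1/s+1)) := by
    intro e he
    have h2 := (xi_integrableOn s a e hs ha he).const_mul c
    have heq : (fun t => t^(e-1) * δ t)
        = fun t => t^(e-1)*φ t - c * (t^(e-1) * (max (1 - t/a) 0) ^ (1/s)) :=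
      funext fun t => by simp only [hδ]; ring
    rw [heq, integral_sub (hIφ e he) h2, integral_const_mul, xi_moment s a e hs ha he]
  have hδp : ∫ t in Set.Ioi (0:ℝ), t^(p-1) * δ t = 0 := by rw [hδmom p hp, hP]; ring
  have hδq : ∫ t in Set.Ioi (0:ℝ), t^(q-1) * δ t = 0 := by rw [hδmom q hq0, hQ]; ring
  have hgoal : (0:ℝ) ≤ ∫ t in Set.Ioi (0:ℝ), t^(r-1) * δ t → 
      c * (a^r * betaFn r (1/s+1)) ≤ ∫ t in Set.Ioi (0:ℝ), t^(r-1)*φ t := by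
    intro h; rw [hδmom r hr0] at h; linarith
  apply hgoal
  have hξnn : ∀ z : ℝ, (0:ℝ) ≤ c * (max (1 - z/a) 0) ^ (1/s) := fun z =>
    mul_nonneg hc (Real.rpow_nonneg (le_max_right _ _) _)
  set P : Set ℝ := {t : ℝ | 0 < t ∧ 0 < δ t} with hPdef
  have hPsub : ∀ t ∈ P, t ≤ T := by
    intro t ht
    by_contra hh
    push_neg at hh
    have h0 : φ t = 0 := hT t hh
    have h1 : δ t ≤ 0 := by simp only [hδ]; rw [h0]; linarith [hξnn t]
    exact absurd ht.2 (not_lt.2 h1)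
  have hbdd : BddAbove P := ⟨T, fun t ht => hPsub t ht⟩
  have hbddB : BddBelow P := ⟨0, fun t ht => ht.1.le⟩
  set α : ℝ := sInf P with hα
  set β : ℝ := sSup P with hβ
  by_cases hαβ : α < β
  swap
  · -- degenerate case: P is a subsingleton, so δ ≤ 0 a.e., forcing δ = 0 a.e.
    have hPsing : P.Subsingleton := by
      intro t1 h1 t2 h2
      have e1 : t1 ≤ β := le_csSup hbdd h1
      have e2 : α ≤ t1 := csInf_le hbddB h1
      have e3 : t2 ≤ β := le_csSup hbdd h2
      have e4 : α ≤ t2 := csInf_le hbddB h2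
      have : β ≤ α := not_lt.1 hαβ
      linarith
    have hnull : volume P = 0 := Set.Subsingleton.measure_zero hPsing _
    have hnmem : ∀ᵐ t ∂(volume.restrict (Set.Ioi (0:ℝ))), t ∉ P :=
      ae_restrict_of_ae (measure_eq_zero_iff_ae_notMem.mp hnull)
    have hmem := ae_restrict_mem (μ := volume) (measurableSet_Ioi (a := (0:ℝ)))
    have hae : ∀ᵐ t ∂(volume.restrict (Set.Ioi (0:ℝ))), 0 ≤ -(t^(p-1) * δ t) := by
      filter_upwards [hnmem, hmem] with t h1 h2
      have hδ0 : δ t ≤ 0 := by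
        by_contra hh; push_neg at hh
        exact h1 ⟨h2, hh⟩
      have := mul_nonpos_of_nonneg_of_nonpos (Real.rpow_nonneg (le_of_lt h2) (p-1)) hδ0
      linarith
    have hzero : (fun t => -(t^(p-1) * δ t)) =ᵐ[volume.restrict (Set.Ioi (0:ℝ))] 0 := by
      rw [← integral_eq_zero_iff_of_nonneg_ae hae ((hIδ p hp).neg)]
      rw [integral_neg, hδp, neg_zero]
    have hzr : (fun t => t^(r-1) * δ t) =ᵐ[volume.restrict (Set.Ioi (0:ℝ))] 0 := by
      filter_upwards [hzero, hmem] with t h1 h2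
      have hp1 : (0:ℝ) < t^(p-1) := Real.rpow_pos_of_pos h2 _
      have hδt : δ t = 0 := by
        have h1' : t^(p-1) * δ t = 0 := by simpa using h1
        rcases mul_eq_zero.1 h1' with h | h
        · exact absurd h (ne_of_gt hp1)
        · exact h
      simp [hδt]
    rw [integral_congr_ae hzr]
    simp
  · -- main case
    have hPne : P.Nonempty := by
      by_contra hh
      rw [Set.not_nonempty_iff_eq_empty] at hh
      rw [hα, hβ, hh, Real.sInf_empty, Real.sSup_empty] at hαβ
      exact lt_irrefl _ hαβ
    have hα0 : 0 ≤ α := le_csInf hPne (fun t ht => ht.1.le)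
    set θ : ℝ := (r-p)/(q-p) with hθ
    have hθ0 : 0 < θ := div_pos (by linarith) (by linarith)
    have hθ1 : θ < 1 := (div_lt_one (by linarith)).2 (by linarith)
    set α' : ℝ := α^(q-p) with hα'
    set β' : ℝ := β^(q-p) with hβ'
    have hα'0 : 0 ≤ α' := Real.rpow_nonneg hα0 _
    have hαβ' : α' < β' := Real.rpow_lt_rpow hα0 hαβ (by linarith)
    set B : ℝ := (β'^θ - α'^θ)/(β' - α') with hB
    set A : ℝ := α'^θ - B*α' with hA
    have hBsolve : B * (β' - α') = β'^θ - α'^θ := div_mul_cancel₀ _ (by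
      intro hh; rw [sub_eq_zero] at hh; exact absurd hh (ne_of_gt hαβ'))
    have hhα : α'^θ + (-A - B*α') = 0 := by rw [hA]; ring
    have hhβ : β'^θ + (-A - B*β') = 0 := by rw [hA]; linear_combination - hBsolve
    have hconc := concave_theta_affine θ A B hθ0 hθ1
    have hptwise : ∀ t ∈ Set.Ioi (0:ℝ), 0 ≤ (t^(r-1) - A*t^(p-1) - B*t^(q-1)) * δ t := by
      intro t ht
      have ht0 : (0:ℝ) < t := ht
      have hgid : t^(r-1) - A*t^(p-1) - B*t^(q-1)
          = t^(p-1) * ((t^(q-p))^θ + (-A - B*(t^(q-p)))) := by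
        have h1 : (t^(q-p))^θ = t^(r-p) := by
          rw [← Real.rpow_mul ht0.le]
          congr 1
          rw [hθ]
          have hqp : q - p ≠ 0 := ne_of_gt (by linarith)
          field_simp
        have e1 : t^(p-1) * t^(r-p) = t^(r-1) := by
          rw [← Real.rpow_add ht0]; congr 1; ring
        have e2 : t^(p-1) * t^(q-p) = t^(q-1) := by
          rw [← Real.rpow_add ht0]; congr 1; ring
        rw [h1]
        linear_combination - e1 + B * e2
      have hp1 : (0:ℝ) ≤ t^(p-1) := Real.rpow_nonneg ht0.le _
      rcases lt_trichotomy (δ t) 0 with hneg | hz | hpos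
      · have hcase : t ≤ α ∨ β ≤ t := by
          by_contra hcon
          push_neg at hcon
          obtain ⟨hαt, htβ⟩ := hcon
          obtain ⟨x, hxP, hxt⟩ := (csInf_lt_iff hbddB hPne).1 hαt
          obtain ⟨y, hyP, hty⟩ := (lt_csSup_iff hbdd hPne).1 htβ
          have hmid : 0 ≤ δ t := delta_middle s hs φ hφ_nonneg hφ_conc a c ha hc
            x t y hxP.1 hxt hty hxP.2 hyP.2
          linarith
        rcases hcase with hl | hr
        · have hub : t^(q-p) ≤ α' := Real.rpow_le_rpow ht0.le hl (by linarith)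
          have hnp := concave_nonpos_left hconc hα'0 hαβ' hhα hhβ (t^(q-p))
            (Real.rpow_nonneg ht0.le _) hub
          rw [hgid]
          have h3 : t^(p-1) * ((t^(q-p))^θ + (-A - B*(t^(q-p)))) ≤ 0 :=
            mul_nonpos_of_nonneg_of_nonpos hp1 hnp
          nlinarith [mul_nonneg (neg_nonneg.2 h3) (neg_nonneg.2 hneg.le)]
        · have hlb : β' ≤ t^(q-p) := Real.rpow_le_rpow (by linarith [hα0, hαβ] : (0:ℝ) ≤ β) hr (by linarith)
          have hnp := concave_nonpos_right hconc hα'0 hαβ' hhα hhβ (t^(q-p)) hlb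
          rw [hgid]
          have h3 : t^(p-1) * ((t^(q-p))^θ + (-A - B*(t^(q-p)))) ≤ 0 :=
            mul_nonpos_of_nonneg_of_nonpos hp1 hnp
          nlinarith [mul_nonneg (neg_nonneg.2 h3) (neg_nonneg.2 hneg.le)]
      · rw [hz, mul_zero]
      · have h1 : α ≤ t := csInf_le hbddB ⟨ht0, hpos⟩
        have h2 : t ≤ β := le_csSup hbdd ⟨ht0, hpos⟩
        have hlb : α' ≤ t^(q-p) := Real.rpow_le_rpow hα0 h1 (by linarith)
        have hub : t^(q-p) ≤ β' := Real.rpow_le_rpow ht0.le h2 (by linarith)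
        have hnn := concave_nonneg_between hconc hα'0 hαβ' hhα hhβ (t^(q-p)) ⟨hlb, hub⟩
        rw [hgid]
        exact mul_nonneg (mul_nonneg hp1 hnn) hpos.le
    have hint0 : 0 ≤ ∫ t in Set.Ioi (0:ℝ), (t^(r-1) - A*t^(p-1) - B*t^(q-1)) * δ t :=
      setIntegral_nonneg measurableSet_Ioi hptwise
    have hfeq : (fun t : ℝ => (t^(r-1) - A*t^(p-1) - B*t^(q-1)) * δ t)
        = fun t => ((t^(r-1)*δ t) - A*(t^(p-1)*δ t)) - B*(t^(q-1)*δ t) := funext fun t => by ring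
    have hI1 : IntegrableOn (fun t : ℝ => t^(r-1)*δ t - A*(t^(p-1)*δ t)) (Set.Ioi (0:ℝ)) :=
      ((hIδ r hr0).sub ((hIδ p hp).const_mul A)).congr
        (Filter.Eventually.of_forall fun t => by simp [Pi.sub_apply])
    rw [hfeq, integral_sub hI1 ((hIδ q hq0).const_mul B),
      integral_sub (hIδ r hr0) ((hIδ p hp).const_mul A),
      integral_const_mul, integral_const_mul, hδp, hδq] at hint0
    simpa using hint0
end
section
open MeasureTheory Real Set

lemma betaFn_pos {x y : ℝ} (hx : 0 < x) (hy : 0 < y) : 0 < betaFn x y :=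
  div_pos (mul_pos (Real.Gamma_pos_of_pos hx) (Real.Gamma_pos_of_pos hy))
    (Real.Gamma_pos_of_pos (by linarith))

lemma log_concave_master (s : ℝ) (hs : 0 < s) (φ : ℝ → ℝ) (hφ_nonneg : ∀ t, 0 ≤ φ t)
    (hφ_int : IntegrableOn φ (Set.Ioi (0:ℝ))) (hφ_conc : SConc s φ)
    (u v T : ℝ) (hu : 0 < u) (huv : u < v) (hφu : 0 < φ u) (hφv : 0 < φ v)
    (hT : ∀ t, T < t → φ t = 0)
    (p q : ℝ) (hp : 0 < p) (hpq : p < q) (lam mu : ℝ) (hlam : 0 < lam) (hmu : 0 < mu)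
    (hsum : lam + mu = 1) :
    lam * Real.log ((betaFn p (1/s+1))⁻¹ * ∫ t in Set.Ioi (0:ℝ), t^(p-1) * φ t)
      + mu * Real.log ((betaFn q (1/s+1))⁻¹ * ∫ t in Set.Ioi (0:ℝ), t^(q-1) * φ t)
    ≤ Real.log ((betaFn (lam*p+mu*q) (1/s+1))⁻¹
        * ∫ t in Set.Ioi (0:ℝ), t^((lam*p+mu*q)-1) * φ t) := by
  have hq0 : 0 < q := by linarith
  set r : ℝ := lam*p + mu*q with hrdef
  have hpr : p < r := by nlinarith
  have hrq : r < q := by nlinarith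
  have hr0 : 0 < r := by linarith
  have hs1 : (0:ℝ) < 1/s + 1 := by positivity
  set Bp : ℝ := betaFn p (1/s+1) with hBpdef
  set Bq : ℝ := betaFn q (1/s+1) with hBqdef
  set Br : ℝ := betaFn r (1/s+1) with hBrdef
  have hBp : 0 < Bp := betaFn_pos hp hs1
  have hBq : 0 < Bq := betaFn_pos hq0 hs1
  have hBr : 0 < Br := betaFn_pos hr0 hs1
  have hΦp : 0 < ∫ t in Set.Ioi (0:ℝ), t^(p-1) * φ t :=
    phi_moment_pos s hs φ hφ_nonneg hφ_conc u v hu huv hφu hφv p hp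
      (phi_moment_integrable s hs φ hφ_nonneg hφ_int hφ_conc u v T hu huv hφv hT p hp)
  have hΦq : 0 < ∫ t in Set.Ioi (0:ℝ), t^(q-1) * φ t :=
    phi_moment_pos s hs φ hφ_nonneg hφ_conc u v hu huv hφu hφv q hq0
      (phi_moment_integrable s hs φ hφ_nonneg hφ_int hφ_conc u v T hu huv hφv hT q hq0)
  set Φp : ℝ := ∫ t in Set.Ioi (0:ℝ), t^(p-1) * φ t with hΦpdef
  set Φq : ℝ := ∫ t in Set.Ioi (0:ℝ), t^(q-1) * φ t with hΦqdef
  set Φr : ℝ := ∫ t in Set.Ioi (0:ℝ), t^(r-1) * φ t with hΦrdef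
  set X : ℝ := (Φq * Bp) / (Φp * Bq) with hXdef
  have hX : 0 < X := div_pos (mul_pos hΦq hBp) (mul_pos hΦp hBq)
  set a : ℝ := X ^ (1/(q-p)) with hadef
  have ha : 0 < a := Real.rpow_pos_of_pos hX _
  have haqp : a ^ (q-p) = X := by
    rw [hadef, ← Real.rpow_mul hX.le, one_div_mul_cancel (ne_of_gt (by linarith : (0:ℝ) < q - p)),
      Real.rpow_one]
  set c : ℝ := Φp / (a^p * Bp) with hcdef
  have hap : (0:ℝ) < a^p := Real.rpow_pos_of_pos ha _
  have hc : 0 < c := div_pos hΦp (mul_pos hap hBp)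
  have hP : Φp = c * (a^p * Bp) := by
    rw [hcdef, div_mul_cancel₀ _ (ne_of_gt (mul_pos hap hBp))]
  have haq : a ^ q = a^p * a^(q-p) := by
    rw [← Real.rpow_add ha]; congr 1; ring
  have hQ : Φq = c * (a^q * Bq) := by
    rw [haq, haqp, hcdef, hXdef]
    field_simp
  have hkey : c * (a^r * Br) ≤ Φr :=
    key_ineq s hs φ hφ_nonneg hφ_int hφ_conc u v T hu huv hφu hφv hT p q r hp hpr hrq
      a c ha hc.le hP hQ
  have hlog : ∀ (Be : ℝ), 0 < Be → ∀ e : ℝ,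
      Real.log (Be⁻¹ * (c * (a^e * Be))) = Real.log c + e * Real.log a := by
    intro Be hBe e
    have h1 : Be⁻¹ * (c * (a^e * Be)) = c * a^e := by
      field_simp
    rw [h1, Real.log_mul (ne_of_gt hc) (ne_of_gt (Real.rpow_pos_of_pos ha e)),
      Real.log_rpow ha]
  have hFp : Real.log (Bp⁻¹ * Φp) = Real.log c + p * Real.log a := by
    rw [hP]; exact hlog Bp hBp p
  have hFq : Real.log (Bq⁻¹ * Φq) = Real.log c + q * Real.log a := by
    rw [hQ]; exact hlog Bq hBq q
  have hFr : Real.log c + r * Real.log a ≤ Real.log (Br⁻¹ * Φr) := by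
    rw [← hlog Br hBr r]
    apply Real.log_le_log (by positivity)
    exact mul_le_mul_of_nonneg_left hkey (inv_nonneg.2 hBr.le)
  rw [hFp, hFq]
  refine le_trans (le_of_eq ?_) hFr
  linear_combination Real.log c * hsum
end

end AuxLemmas

/-- For `s > 0` and `φ : [0,∞) → [0,∞)` integrable and `s`-concave,
`p ↦ B(p, 1/s + 1)⁻¹ ∫₀^∞ t^{p-1} φ(t) dt` is log-concave on `(0,∞)`. -/
theorem stmt4
    (s : ℝ) (hs : 0 < s) (φ : ℝ → ℝ)
    (hφ_nonneg : ∀ t, 0 ≤ φ t)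
    (hφ_int : IntegrableOn φ (Set.Ioi (0 : ℝ)))
    (hφ_conc : ∀ x ∈ Set.Ici (0 : ℝ), ∀ y ∈ Set.Ici (0 : ℝ), 0 < φ x * φ y →
      ∀ lam ∈ Set.Icc (0 : ℝ) 1,
        ((1 - lam) * φ x ^ s + lam * φ y ^ s) ^ (1 / s) ≤ φ ((1 - lam) * x + lam * y)) :
    ConcaveOn ℝ (Set.Ioi (0 : ℝ))
      (fun p => Real.log ((betaFn p (1 / s + 1))⁻¹ * ∫ t in Set.Ioi (0 : ℝ), t ^ (p - 1) * φ t)) := by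
  have hconc : SConc s φ := hφ_conc
  by_cases hnd : ∃ x y : ℝ, 0 ≤ x ∧ x < y ∧ 0 < φ x ∧ 0 < φ y
  · -- nondegenerate case
    obtain ⟨x', y', hx'0, hx'y', hφx', hφy'⟩ := hnd
    set u : ℝ := (x' + y')/2 with hudef
    have hy'0 : 0 < y' := lt_of_le_of_lt hx'0 hx'y'
    have hu : 0 < u := by rw [hudef]; linarith
    have huv : u < y' := by rw [hudef]; linarith
    have hφu : 0 < φ u := by
      have h := hconc x' hx'0 y' (Set.mem_Ici.mpr hy'0.le) (mul_pos hφx' hφy')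
        (1/2) ⟨by norm_num, by norm_num⟩
      have heq : (1 - 1/2 : ℝ) * x' + (1/2) * y' = u := by rw [hudef]; ring
      rw [heq] at h
      refine lt_of_lt_of_le ?_ h
      apply Real.rpow_pos_of_pos
      have h1 : (0:ℝ) < φ x' ^ s := Real.rpow_pos_of_pos hφx' s
      have h2 : (0:ℝ) < φ y' ^ s := Real.rpow_pos_of_pos hφy' s
      linarith
    obtain ⟨T, _hT0, hT⟩ := support_bdd s hs φ hφ_nonneg hφ_int hconc u hu hφu
    refine ⟨convex_Ioi 0, fun x hx y hy lam mu hlam hmu hsum => ?_⟩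
    simp only [smul_eq_mul]
    rcases eq_or_lt_of_le hlam with hlam0 | hlam0
    · rw [← hlam0, show mu = 1 by linarith]
      simp
    rcases eq_or_lt_of_le hmu with hmu0 | hmu0
    · rw [← hmu0, show lam = 1 by linarith]
      simp
    rcases lt_trichotomy x y with hxy | hxy | hxy
    · exact log_concave_master s hs φ hφ_nonneg hφ_int hconc u y' T hu huv hφu hφy' hT
        x y hx hxy lam mu hlam0 hmu0 hsum
    · rw [← hxy, show lam * x + mu * x = x by linear_combination x * hsum]
      have : lam * Real.log ((betaFn x (1/s+1))⁻¹ * ∫ t in Set.Ioi (0:ℝ), t^(x-1)*φ t)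
          + mu * Real.log ((betaFn x (1/s+1))⁻¹ * ∫ t in Set.Ioi (0:ℝ), t^(x-1)*φ t)
          = Real.log ((betaFn x (1/s+1))⁻¹ * ∫ t in Set.Ioi (0:ℝ), t^(x-1)*φ t) := by
        linear_combination (Real.log ((betaFn x (1/s+1))⁻¹ * ∫ t in Set.Ioi (0:ℝ), t^(x-1)*φ t)) * hsum
      rw [this]
    · have h := log_concave_master s hs φ hφ_nonneg hφ_int hconc u y' T hu huv hφu hφy' hT
        y x hy hxy mu lam hmu0 hlam0 (by linarith)
      rw [show mu * y + lam * x = lam * x + mu * y from by ring] at h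
      linarith
  · -- degenerate case : φ = 0 a.e. on (0,∞)
    push_neg at hnd
    have hsing : Set.Subsingleton {t : ℝ | t ∈ Set.Ioi (0:ℝ) ∧ φ t ≠ 0} := by
      intro t1 h1 t2 h2
      by_contra hne
      have hφ1 : 0 < φ t1 := lt_of_le_of_ne (hφ_nonneg t1) (Ne.symm h1.2)
      have hφ2 : 0 < φ t2 := lt_of_le_of_ne (hφ_nonneg t2) (Ne.symm h2.2)
      rcases lt_or_gt_of_ne hne with hlt | hgt
      · exact absurd hφ2 (not_lt.2 (hnd t1 t2 h1.1.le hlt hφ1))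
      · exact absurd hφ1 (not_lt.2 (hnd t2 t1 h2.1.le hgt hφ2))
    have hnull : volume {t : ℝ | t ∈ Set.Ioi (0:ℝ) ∧ φ t ≠ 0} = 0 :=
      hsing.measure_zero _
    have hzero : ∀ z : ℝ, (∫ t in Set.Ioi (0:ℝ), t^(z-1) * φ t) = 0 := by
      intro z
      have h1 : ∀ᵐ t ∂(volume.restrict (Set.Ioi (0:ℝ))),
          t ∉ {t : ℝ | t ∈ Set.Ioi (0:ℝ) ∧ φ t ≠ 0} :=
        ae_restrict_of_ae (measure_eq_zero_iff_ae_notMem.mp hnull)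
      have hae0 : (fun t => t^(z-1) * φ t) =ᵐ[volume.restrict (Set.Ioi (0:ℝ))] 0 := by
        filter_upwards [h1, ae_restrict_mem (measurableSet_Ioi (a := (0:ℝ)))] with t h1t h2t
        have : φ t = 0 := by
          by_contra hh
          exact h1t ⟨h2t, hh⟩
        simp [this]
      rw [integral_congr_ae hae0]
      simp
    refine ⟨convex_Ioi 0, fun x hx y hy lam mu hlam hmu hsum => ?_⟩
    simp only [smul_eq_mul, hzero, mul_zero, Real.log_zero]
    simp
end

section
/- Let U: ℝⁿ → [0, ∞] be a convex function that is positively homogeneous of degree 1, with C_U = |{x : U(x) ≤ 1}| < ∞. For s > 0 let f_{s,U}(x) = (1 - s U(x))₊^{1/s}. Then for all p > 0, ∫_{ℝⁿ} f_{s,U}(x)^p dx = C_U · n! / ((p+s)(p+2s)⋯(p+ns)). -/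
open MeasureTheory Real Set Filter
open scoped ENNReal Pointwise

lemma cont_rpow' {a : ℝ} (ha : 0 ≤ a) : Continuous (fun t : ℝ => t ^ a) :=
  continuous_iff_continuousAt.2 fun x => Real.continuousAt_rpow_const x a (Or.inr ha)

lemma auxI {a : ℝ} (ha : 0 < a) : ∀ m : ℕ,
    (∫ t in (0:ℝ)..1, (1 - t ^ a) ^ m) = ∏ i ∈ Finset.Icc 1 m, ((i:ℝ) * a) / (1 + (i:ℝ) * a) := by
  intro m
  induction m with
  | zero => simp
  | succ n ih =>
    set m := n + 1 with hm
    have hcont : Continuous fun t : ℝ => (1 - t ^ a) ^ m :=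
      ((continuous_const.sub (cont_rpow' ha.le)).pow m)
    have hcontn : Continuous fun t : ℝ => (1 - t ^ a) ^ n :=
      ((continuous_const.sub (cont_rpow' ha.le)).pow n)
    set F : ℝ → ℝ := fun t => t * (1 - t ^ a) ^ m with hF
    set g : ℝ → ℝ := fun t => (1 + m * a) * (1 - t ^ a) ^ m - m * a * (1 - t ^ a) ^ n with hg
    have hgcont : Continuous g := (continuous_const.mul hcont).sub (continuous_const.mul hcontn)
    have hderiv : ∀ t ∈ Set.uIcc (0:ℝ) 1, HasDerivAt F (g t) t := by
      intro t ht
      rw [Set.uIcc_of_le (by norm_num : (0:ℝ) ≤ 1)] at ht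
      rcases eq_or_lt_of_le ht.1 with h0 | h0
      · subst h0
        have hg0 : g 0 = 1 := by
          simp only [hg, Real.zero_rpow (ne_of_gt ha), sub_zero, one_pow, mul_one]
          ring
        rw [hg0, hasDerivAt_iff_tendsto_slope]
        have h1 : Tendsto (fun t : ℝ => (1 - t ^ a) ^ m) (nhdsWithin 0 {(0:ℝ)}ᶜ) (nhds 1) := by
          have h2 : Tendsto (fun t : ℝ => (1 - t ^ a) ^ m) (nhds 0)
              (nhds ((1 - (0:ℝ) ^ a) ^ m)) := hcont.continuousAt.tendsto
          rw [Real.zero_rpow (ne_of_gt ha)] at h2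
          simpa using h2.mono_left nhdsWithin_le_nhds
        refine h1.congr' ?_
        filter_upwards [self_mem_nhdsWithin] with t (ht : t ≠ 0)
        simp [slope, hF, sub_zero, mul_comm, ht, mul_div_assoc, div_self]
      · have hrpow : HasDerivAt (fun t : ℝ => t ^ a) (a * t ^ (a - 1)) t :=
          Real.hasDerivAt_rpow_const (Or.inl (ne_of_gt h0))
        have h1 : HasDerivAt (fun t : ℝ => (1 - t ^ a) ^ m)
            ((m : ℝ) * (1 - t ^ a) ^ n * (0 - a * t ^ (a - 1))) t := by
          have := ((hasDerivAt_const t (1:ℝ)).sub hrpow).pow m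
          simpa [hm, Pi.pow_def, Pi.sub_def] using this
        have h2 : HasDerivAt F
            (1 * (1 - t ^ a) ^ m + t * ((m : ℝ) * (1 - t ^ a) ^ n * (0 - a * t ^ (a - 1)))) t :=
          (hasDerivAt_id t).mul h1
        convert h2 using 1
        have hta : t * (a * t ^ (a - 1)) = a * t ^ a := by
          rw [mul_comm t, mul_assoc, ← Real.rpow_add_one (ne_of_gt h0)]
          ring_nf
        have hsplit : (1 - t ^ a) ^ m = (1 - t ^ a) ^ n * (1 - t ^ a) := by ring
        simp only [hg]
        rw [hsplit]
        linear_combination ((m:ℝ) * (1 - t ^ a) ^ n) * hta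
    have hFTC : (∫ t in (0:ℝ)..1, g t) = F 1 - F 0 :=
      intervalIntegral.integral_eq_sub_of_hasDerivAt hderiv (hgcont.intervalIntegrable 0 1)
    have hF10 : F 1 - F 0 = 0 := by
      simp [hF, Real.one_rpow, hm]
    have hsplit : (∫ t in (0:ℝ)..1, g t)
        = (1 + m * a) * (∫ t in (0:ℝ)..1, (1 - t ^ a) ^ m)
          - m * a * (∫ t in (0:ℝ)..1, (1 - t ^ a) ^ n) := by
      rw [intervalIntegral.integral_sub ((hcont.intervalIntegrable 0 1).const_mul _)
        ((hcontn.intervalIntegrable 0 1).const_mul _),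
        intervalIntegral.integral_const_mul, intervalIntegral.integral_const_mul]
    have hkey : (1 + (m:ℝ) * a) * (∫ t in (0:ℝ)..1, (1 - t ^ a) ^ m)
        = m * a * (∫ t in (0:ℝ)..1, (1 - t ^ a) ^ n) := by
      have h : (1 + (m:ℝ) * a) * (∫ t in (0:ℝ)..1, (1 - t ^ a) ^ m)
          - (m:ℝ) * a * (∫ t in (0:ℝ)..1, (1 - t ^ a) ^ n) = 0 := by
        rw [← hsplit, hFTC, hF10]
      linarith
    have hpos : (0:ℝ) < 1 + (m:ℝ) * a := by positivity
    have : (∫ t in (0:ℝ)..1, (1 - t ^ a) ^ m)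
        = ((m:ℝ) * a) / (1 + (m:ℝ) * a) * (∫ t in (0:ℝ)..1, (1 - t ^ a) ^ n) := by
      field_simp
      linarith [hkey]
    rw [this, ih, hm, Finset.prod_Icc_succ_top (Nat.le_add_left 1 n)]
    push_cast
    ring

lemma prod_Icc_cast (n : ℕ) : (∏ i ∈ Finset.Icc 1 n, (i:ℝ)) = n.factorial := by
  induction n with
  | zero => simp
  | succ m ih =>
    rw [Finset.prod_Icc_succ_top (Nat.le_add_left 1 m), ih, Nat.factorial_succ]
    push_cast
    ring


/-- Let `U` be convex and positively 1-homogeneous on a convex cone `K ⊆ ℝⁿ`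
(modelling a `[0,∞]`-valued convex function, infinite outside `K`), with
`C_U = |{x ∈ K : U(x) ≤ 1}| < ∞`. For `s > 0` and `f_{s,U} = (1 - sU)₊^{1/s}` (vanishing
outside `K`), one has `∫ f_{s,U}^p = C_U n! / ((p+s)(p+2s)⋯(p+ns))` for every `p > 0`. -/
theorem stmt10
    (n : ℕ) (K : Set (Fin n → ℝ)) (hK : Convex ℝ K)
    (hK_cone : ∀ t : ℝ, 0 < t → ∀ x ∈ K, t • x ∈ K)
    (U : (Fin n → ℝ) → ℝ) (hU_nonneg : ∀ x ∈ K, 0 ≤ U x)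
    (hU_conv : ConvexOn ℝ K U)
    (hU_hom : ∀ t : ℝ, 0 < t → ∀ x ∈ K, U (t • x) = t * U x)
    (hfin : volume {x ∈ K | U x ≤ 1} < ⊤)
    (s : ℝ) (hs : 0 < s) :
    ∀ p > (0 : ℝ),
      (∫ x in K, ((max (1 - s * U x) 0) ^ (1 / s)) ^ p)
        = (volume {x ∈ K | U x ≤ 1}).toReal * (n.factorial : ℝ)
            / ∏ i ∈ Finset.Icc 1 n, (p + (i : ℝ) * s) := by
  intro p hp
  set C : ℝ≥0∞ := volume {x ∈ K | U x ≤ 1} with hC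
  set f : (Fin n → ℝ) → ℝ := fun x => ((max (1 - s * U x) 0) ^ (1 / s)) ^ p with hf
  set q : ℝ := (1 / s) * p with hq
  have hq0 : 0 < q := by positivity
  set r : ℝ → ℝ := fun t => (1 - t ^ q⁻¹) / s with hr
  -- scaling of sublevel sets
  have hscale : ∀ c : ℝ, 0 < c → volume {x ∈ K | U x ≤ c} = ENNReal.ofReal (c ^ n) * C := by
    intro c hc
    have hset : {x ∈ K | U x ≤ c} = c • {x ∈ K | U x ≤ 1} := by
      ext x
      constructor
      · rintro ⟨hxK, hxU⟩
        refine Set.mem_smul_set.2 ⟨c⁻¹ • x, ⟨hK_cone c⁻¹ (by positivity) x hxK, ?_⟩, ?_⟩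
        · rw [hU_hom c⁻¹ (by positivity) x hxK]
          rw [inv_mul_le_iff₀ hc]
          simpa using hxU
        · simp [smul_smul, mul_inv_cancel₀ (ne_of_gt hc)]
      · intro hx
        obtain ⟨y, hy, rfl⟩ := Set.mem_smul_set.1 hx
        obtain ⟨hyK, hyU⟩ := hy
        refine ⟨hK_cone c hc y hyK, ?_⟩
        rw [hU_hom c hc y hyK]
        calc c * U y ≤ c * 1 := by nlinarith
        _ = c := mul_one c
    rw [hset, Measure.addHaar_smul volume, Module.finrank_fin_fun,
      abs_of_nonneg (by positivity : (0:ℝ) ≤ c ^ n), ← hC]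
  -- a.e. measurability of U on K
  have hUae : AEMeasurable U (volume.restrict K) := by
    have hsub : K \ interior K ⊆ frontier K := fun x hx => ⟨subset_closure hx.1, hx.2⟩
    have hnull : volume (K \ interior K) = 0 :=
      measure_mono_null hsub (hK.addHaar_frontier volume)
    have hcontU : ContinuousOn U (interior K) :=
      (hU_conv.subset interior_subset hK.interior).continuousOn isOpen_interior
    have h1 : AEMeasurable U (volume.restrict (interior K)) :=
      hcontU.aemeasurable isOpen_interior.measurableSet
    refine h1.mono_measure ?_
    have hKeq : K = interior K ∪ (K \ interior K) := (Set.union_diff_cancel interior_subset).symm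
    calc volume.restrict K = volume.restrict (interior K ∪ (K \ interior K)) := by rw [← hKeq]
    _ ≤ volume.restrict (interior K) + volume.restrict (K \ interior K) :=
        Measure.restrict_union_le _ _
    _ = volume.restrict (interior K) := by
        rw [Measure.restrict_eq_zero.2 hnull, add_zero]
  have hfae : AEMeasurable f (volume.restrict K) := by
    have hφ : Continuous fun y : ℝ => ((max (1 - s * y) 0) ^ (1 / s)) ^ p := by
      apply (cont_rpow' hp.le).comp
      apply (cont_rpow' (by positivity : (0:ℝ) ≤ 1/s)).comp
      exact (continuous_const.sub (continuous_const.mul continuous_id)).max continuous_const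
    exact hφ.measurable.comp_aemeasurable hUae
  have hf_nn : ∀ x, 0 ≤ f x := fun x =>
    Real.rpow_nonneg (Real.rpow_nonneg (le_max_right _ _) _) _
  -- Bochner to lintegral and layercake
  have h1 : (∫ x in K, f x)
      = (∫⁻ t in Ioi (0:ℝ), (volume.restrict K) {a | t ≤ f a}).toReal := by
    rw [integral_eq_lintegral_of_nonneg_ae (ae_of_all _ hf_nn) hfae.aestronglyMeasurable,
      lintegral_eq_lintegral_meas_le _ (ae_of_all _ hf_nn) hfae]
  -- the measure of superlevel sets
  have hmeas : ∀ t ∈ Ioo (0:ℝ) 1,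
      (volume.restrict K) {a | t ≤ f a} = C * ENNReal.ofReal (r t ^ n) := by
    intro t ht
    have hrt : 0 < r t := by
      have h4 : t ^ q⁻¹ < 1 := Real.rpow_lt_one ht.1.le ht.2 (by positivity)
      rw [hr]
      exact div_pos (by linarith) hs
    rw [Measure.restrict_apply₀' (hK.nullMeasurableSet volume)]
    have hset : {a | t ≤ f a} ∩ K = {x ∈ K | U x ≤ r t} := by
      ext x
      simp only [Set.mem_inter_iff, Set.mem_setOf_eq, Set.mem_sep_iff]
      constructor
      · rintro ⟨hle, hxK⟩
        refine ⟨hxK, ?_⟩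
        have hz : (0:ℝ) ≤ max (1 - s * U x) 0 := le_max_right _ _
        rw [hf] at hle
        simp only at hle
        rw [← Real.rpow_mul hz, ← hq] at hle
        have h2 : t ^ q⁻¹ ≤ max (1 - s * U x) 0 :=
          (Real.rpow_inv_le_iff_of_pos ht.1.le hz hq0).2 hle
        have h3 : t ^ q⁻¹ ≤ 1 - s * U x := by
          rcases le_max_iff.1 h2 with h | h
          · exact h
          · exact absurd h (not_le.2 (Real.rpow_pos_of_pos ht.1 _))
        rw [hr]
        simp only
        rw [le_div_iff₀ hs]
        linarith
      · rintro ⟨hxK, hle⟩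
        refine ⟨?_, hxK⟩
        have h3 : t ^ q⁻¹ ≤ 1 - s * U x := by
          rw [hr] at hle
          simp only at hle
          rw [le_div_iff₀ hs] at hle
          linarith
        have h2 : t ^ q⁻¹ ≤ max (1 - s * U x) 0 := le_max_of_le_left h3
        have hz : (0:ℝ) ≤ max (1 - s * U x) 0 := le_max_right _ _
        rw [hf]
        simp only
        rw [← Real.rpow_mul hz, ← hq]
        exact (Real.rpow_inv_le_iff_of_pos ht.1.le hz hq0).1 h2
    rw [hset, hscale (r t) hrt, mul_comm]
  have hempty : ∀ t ∈ Ioi (1:ℝ), (volume.restrict K) {a | t ≤ f a} = 0 := by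
    intro t ht
    rw [Measure.restrict_apply₀' (hK.nullMeasurableSet volume)]
    convert measure_empty (μ := (volume : Measure (Fin n → ℝ)))
    ext x
    simp only [Set.mem_inter_iff, Set.mem_setOf_eq, Set.mem_empty_iff_false, iff_false, not_and]
    intro hle hxK
    have hz1 : max (1 - s * U x) 0 ≤ 1 := by
      have h5 := hU_nonneg x hxK
      have h6 : 1 - s * U x ≤ 1 := by nlinarith
      simp [h6]
    have h7 : f x ≤ 1 := by
      rw [hf]
      simp only
      have h8 := Real.rpow_le_one (le_max_right _ _) hz1 (by positivity : (0:ℝ) ≤ 1/s)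
      exact Real.rpow_le_one (Real.rpow_nonneg (le_max_right _ _) _) h8 hp.le
    linarith [Set.mem_Ioi.1 ht]
  -- split the t-integral
  have hsplitI : (∫⁻ t in Ioi (0:ℝ), (volume.restrict K) {a | t ≤ f a})
      = C * ∫⁻ t in Ioo (0:ℝ) 1, ENNReal.ofReal (r t ^ n) := by
    have hU2 : Ioo (0:ℝ) 1 ∪ Ici 1 = Ioi 0 := Set.Ioo_union_Ici_eq_Ioi (by norm_num)
    have hdisj : Disjoint (Ioo (0:ℝ) 1) (Ici 1) :=
      (Set.Iio_disjoint_Ici le_rfl).mono_left Set.Ioo_subset_Iio_self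
    rw [← hU2, lintegral_union measurableSet_Ici hdisj]
    have h2 : (∫⁻ t in Ici (1:ℝ), (volume.restrict K) {a | t ≤ f a}) = 0 := by
      rw [setLIntegral_congr (Ioi_ae_eq_Ici (a := (1:ℝ))).symm,
        setLIntegral_congr_fun measurableSet_Ioi
          (fun t ht => hempty t ht)]
      simp
    have h3 : (∫⁻ t in Ioo (0:ℝ) 1, (volume.restrict K) {a | t ≤ f a})
        = C * ∫⁻ t in Ioo (0:ℝ) 1, ENNReal.ofReal (r t ^ n) := by
      rw [setLIntegral_congr_fun measurableSet_Ioo (fun t ht => hmeas t ht)]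
      exact lintegral_const_mul' _ _ hfin.ne
    rw [h2, h3, add_zero]
  -- convert t-integral to a real integral
  have hrcont : Continuous fun t : ℝ => r t ^ n := by
    rw [hr]
    exact ((continuous_const.sub (cont_rpow' (inv_nonneg.2 hq0.le))).div_const s).pow n
  have hrnn : ∀ᵐ t ∂(volume.restrict (Ioo (0:ℝ) 1)), 0 ≤ r t ^ n := by
    filter_upwards [ae_restrict_mem measurableSet_Ioo] with t ht
    have h4 : t ^ q⁻¹ ≤ 1 := Real.rpow_le_one ht.1.le ht.2.le (by positivity)
    have h5 : 0 ≤ r t := div_nonneg (by linarith) hs.le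
    exact pow_nonneg h5 n
  have hInt : (∫ t in Ioo (0:ℝ) 1, r t ^ n)
      = (∫⁻ t in Ioo (0:ℝ) 1, ENNReal.ofReal (r t ^ n)).toReal := by
    rw [integral_eq_lintegral_of_nonneg_ae hrnn hrcont.aestronglyMeasurable]
  -- compute the real integral
  have hval : (∫ t in Ioo (0:ℝ) 1, r t ^ n)
      = (∏ i ∈ Finset.Icc 1 n, ((i:ℝ) * q⁻¹) / (1 + (i:ℝ) * q⁻¹)) / s ^ n := by
    rw [← integral_Ioc_eq_integral_Ioo,
      ← intervalIntegral.integral_of_le (by norm_num : (0:ℝ) ≤ 1)]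
    have : ∀ t : ℝ, r t ^ n = (1 - t ^ q⁻¹) ^ n / s ^ n := fun t => div_pow _ _ _
    simp_rw [this]
    rw [intervalIntegral.integral_div, auxI (inv_pos.2 hq0) n]
  -- put everything together
  rw [h1, hsplitI, ENNReal.toReal_mul, ← hInt, hval]
  -- final algebra
  have hq_inv : q⁻¹ = s / p := by
    rw [hq]
    field_simp
  have hD : (0:ℝ) < ∏ i ∈ Finset.Icc 1 n, (p + (i:ℝ) * s) := by
    apply Finset.prod_pos
    intro i hi
    have : (0:ℝ) ≤ (i:ℝ) := Nat.cast_nonneg i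
    nlinarith
  have hfactor : (∏ i ∈ Finset.Icc 1 n, ((i:ℝ) * q⁻¹) / (1 + (i:ℝ) * q⁻¹))
      = (n.factorial * s ^ n) / ∏ i ∈ Finset.Icc 1 n, (p + (i:ℝ) * s) := by
    have h6 : ∀ i ∈ Finset.Icc 1 n, ((i:ℝ) * q⁻¹) / (1 + (i:ℝ) * q⁻¹)
        = ((i:ℝ) * s) / (p + (i:ℝ) * s) := by
      intro i hi
      rw [hq_inv]
      have hpi : (0:ℝ) < p + (i:ℝ) * s := by
        have : (0:ℝ) ≤ (i:ℝ) := Nat.cast_nonneg i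
        nlinarith
      field_simp
    rw [Finset.prod_congr rfl h6, Finset.prod_div_distrib]
    congr 1
    rw [Finset.prod_mul_distrib, prod_Icc_cast, Finset.prod_const, Nat.card_Icc]
    simp
  rw [hfactor]
  have hsn : (0:ℝ) < s ^ n := by positivity
  field_simp
  ring
end
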